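/- Soundness of wp-idx-post: suppose Γ ⊢ WP t⃗ Q is valid (for all hyper-stores s, Γ s implies WP t⃗ Q s), and j ∉ supp(t⃗) ∪ idx(Γ). Then Γ ⊢ WP t⃗ (Q[j ↦ i]) is valid, where Q[j ↦ i] is the reindexing substituting index j by i: Q[j↦i] v⃗ s' := Q (v⃗ with j set to v⃗ i) (s' with store at j set to s' i). -/

import Mathlib

abbrev Idx := ℕ
abbrev PVar := String
abbrev Val := ℤ
abbrev Store := PVar → Val
abbrev HStore := Idx → Store
abbrev HRet := Idx → Option Val

inductive Term : Type where
  | val : Val → Term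
  | var : PVar → Term
  | star : Term
  | skip : Term
  | assign : PVar → Term → Term
  | seq : Term → Term → Term
  | ite : Term → Term → Term → Term
  | whileDo : Term → Term → Term

inductive BigStep : Term → Store → Val → Store → Prop where
  | skip {σ v} : BigStep .skip σ v σ
  | val {σ v} : BigStep (.val v) σ v σ
  | var {σ x} : BigStep (.var x) σ (σ x) σ
  | star {σ v} : BigStep .star σ v σ
  | assign {x e σ v σ'} : BigStep e σ v σ' →
      BigStep (.assign x e) σ v (Function.update σ' x v)
  | seq {t₁ t₂ σ σ' σ'' v₁ v} : BigStep t₁ σ v₁ σ' → BigStep t₂ σ' v σ'' →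
      BigStep (.seq t₁ t₂) σ v σ''
  | iteT {g t₁ t₂ σ σ' σ'' b v} : BigStep g σ b σ' → b ≠ 0 → BigStep t₁ σ' v σ'' →
      BigStep (.ite g t₁ t₂) σ v σ''
  | iteF {g t₁ t₂ σ σ' σ'' v} : BigStep g σ 0 σ' → BigStep t₂ σ' v σ'' →
      BigStep (.ite g t₁ t₂) σ v σ''
  | whileF {g t σ σ' v} : BigStep g σ 0 σ' → BigStep (.whileDo g t) σ v σ'
  | whileT {g t σ σ₁ σ₂ σ₃ b v' v} : BigStep g σ b σ₁ → b ≠ 0 →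
      BigStep t σ₁ v' σ₂ → BigStep (.whileDo g t) σ₂ v σ₃ →
      BigStep (.whileDo g t) σ v σ₃

abbrev HTerm := Idx → Option Term

def supp (T : HTerm) : Set Idx := {i | T i ≠ none}

def HBigStep (T : HTerm) (s : HStore) (v : HRet) (s' : HStore) : Prop :=
  ∀ i, match T i with
    | some t => ∃ vi, v i = some vi ∧ BigStep t (s i) vi (s' i)
    | none => s' i = s i ∧ v i = none

def WP (T : HTerm) (Q : HRet → HStore → Prop) : HStore → Prop :=
  fun s => ∀ s' v, HBigStep T s v s' → Q v s'

def pvar (P : HStore → Prop) : Set (PVar × Idx) :=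
  {p | ¬ ∀ (s : HStore) (v : Val),
    (P s ↔ P (Function.update s p.2 (Function.update (s p.2) p.1 v)))}

def idxOf (P : HStore → Prop) : Set Idx :=
  {i | ¬ ∀ (s : HStore) (σ : Store), (P s ↔ P (Function.update s i σ))}

def idxPost (Q : HRet → HStore → Prop) : Set Idx :=
  {i | ¬ ∀ (v : HRet) (s : HStore) (σ : Store),
    (Q v s ↔ Q (Function.update v i none) (Function.update s i σ))}

def UpClosed (Q : HRet → HStore → Prop) : Prop :=
  ∀ (v v' : HRet) (s : HStore), Q v s →
    (∀ i vi, v i = some vi → v' i = some vi) → Q v' s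

def hunion {A : Type} (f g : Idx → Option A) : Idx → Option A :=
  fun i => (f i).elim (g i) some

def projAble (T : HTerm) : HStore → Prop :=
  fun s => ∃ v s', HBigStep T s v s'

def Refines (t₁ t₂ : Term) (σ : Store) : Prop :=
  ∀ σ' v, BigStep t₁ σ v σ' → BigStep t₂ σ v σ'

open Classical in
noncomputable def overwriteS (I : Set Idx) (s s₀ : HStore) : HStore :=
  fun i => if i ∈ I then s₀ i else s i

open Classical in
noncomputable def overwriteR (I : Set Idx) (v v₀ : HRet) : HRet :=
  fun i => if i ∈ I then v₀ i else v i

theorem stmt_13 (T : HTerm) (Γ : HStore → Prop) (Q : HRet → HStore → Prop)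
    (hQ : UpClosed Q) (i j : Idx)
    (hvalid : ∀ s, Γ s → WP T Q s)
    (hjT : j ∉ supp T) (hjΓ : j ∉ idxOf Γ) :
    ∀ s, Γ s →
      WP T (fun v s' => Q (Function.update v j (v i)) (Function.update s' j (s' i))) s := by
  intro s hs s' v hbs
  have hTj : T j = none := by
    by_contra h; exact hjT h
  have hj := hbs j
  rw [hTj] at hj
  simp only [idxOf, Set.mem_setOf_eq, not_not] at hjΓ
  have hΓ : Γ (Function.update s j (s' i)) := (hjΓ s (s' i)).mp hs
  have hbs2 : HBigStep T (Function.update s j (s' i)) v (Function.update s' j (s' i)) := by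
    intro k
    have hk := hbs k
    cases hT : T k with
    | none =>
        rw [hT] at hk
        by_cases hkj : k = j
        · subst hkj
          simp [Function.update_self, hj.2]
        · simp [Function.update_of_ne hkj, hk]
    | some t =>
        rw [hT] at hk
        have hkj : k ≠ j := by rintro rfl; rw [hTj] at hT; exact nomatch hT
        simpa [Function.update_of_ne hkj] using hk
  have hQ2 := hvalid _ hΓ _ v hbs2
  refine hQ v _ _ hQ2 ?_
  intro k vk hk
  by_cases hkj : k = j
  · subst hkj; rw [hj.2] at hk; exact nomatch hk
  · rw [Function.update_of_ne hkj]; exact hk
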